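/- The minimum detection error probability ξ*(ρ) = 1 - γ(n, (n(σ²+ρ)/ρ)ln(1+ρ/σ²))/Γ(n) + γ(n, (nσ²/ρ)ln(1+ρ/σ²))/Γ(n) is strictly decreasing in ρ on (0, ∞). -/

import Mathlib

/-- The lower incomplete gamma function `γ(s, x) = ∫₀ˣ t^(s-1) e^{-t} dt`. -/
noncomputable def lowerIncGamma (s x : ℝ) : ℝ :=
  ∫ t in (0:ℝ)..x, t ^ (s - 1) * Real.exp (-t)

private lemma log_lt_aux {u : ℝ} (hu : 0 < u) : Real.log (1 + u) < u := by
  have := Real.log_lt_sub_one_of_pos (by linarith : (0:ℝ) < 1 + u) (by linarith)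
  linarith

private lemma lt_log_aux {u : ℝ} (hu : 0 < u) : u / (1 + u) < Real.log (1 + u) := by
  have h1 : (0:ℝ) < 1 + u := by linarith
  have h2 : (1 + u)⁻¹ < 1 := by
    rw [inv_lt_one_iff₀]; right; linarith
  have h3 := Real.log_lt_sub_one_of_pos (by positivity) (ne_of_lt h2)
  rw [Real.log_inv] at h3
  have h4 : (1 + u)⁻¹ - 1 = -(u / (1 + u)) := by field_simp; ring
  linarith [h4 ▸ h3]

private lemma hasDerivAt_L (σ2 : ℝ) (hσ : 0 < σ2) {ρ : ℝ} (hρ : 0 < ρ) :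
    HasDerivAt (fun x : ℝ => Real.log (1 + x / σ2)) (1 / (σ2 + ρ)) ρ := by
  have h1p : 0 < 1 + ρ / σ2 := by positivity
  have h0 : HasDerivAt (fun x : ℝ => 1 + x / σ2) (1 / σ2) ρ := by
    simpa using ((hasDerivAt_id ρ).div_const σ2).const_add 1
  have h := (Real.hasDerivAt_log (ne_of_gt h1p)).comp ρ h0
  refine h.congr_deriv ?_
  field_simp

private lemma hasDerivAt_f (σ2 : ℝ) (hσ : 0 < σ2) {ρ : ℝ} (hρ : 0 < ρ) :
    HasDerivAt (fun x : ℝ => (σ2 + x) * Real.log (1 + x / σ2) / x)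
      ((ρ - σ2 * Real.log (1 + ρ / σ2)) / ρ ^ 2) ρ := by
  have hL := hasDerivAt_L σ2 hσ hρ
  have h2 : HasDerivAt (fun x : ℝ => σ2 + x) 1 ρ := by
    simpa using (hasDerivAt_id ρ).const_add σ2
  have hN := h2.mul hL
  have hf := hN.div (hasDerivAt_id ρ) (ne_of_gt hρ)
  refine hf.congr_deriv ?_
  have : σ2 + ρ ≠ 0 := by positivity
  simp only [id, Pi.mul_apply]
  field_simp
  ring

private lemma hasDerivAt_g (σ2 : ℝ) (hσ : 0 < σ2) {ρ : ℝ} (hρ : 0 < ρ) :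
    HasDerivAt (fun x : ℝ => Real.log (1 + x / σ2) / x)
      ((ρ / (σ2 + ρ) - Real.log (1 + ρ / σ2)) / ρ ^ 2) ρ := by
  have hL := hasDerivAt_L σ2 hσ hρ
  have hf := hL.div (hasDerivAt_id ρ) (ne_of_gt hρ)
  refine hf.congr_deriv ?_
  have : σ2 + ρ ≠ 0 := by positivity
  simp only [id, Pi.mul_apply]
  field_simp

private lemma f_mono (σ2 : ℝ) (hσ : 0 < σ2) :
    StrictMonoOn (fun x : ℝ => (σ2 + x) * Real.log (1 + x / σ2) / x) (Set.Ioi 0) := by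
  apply strictMonoOn_of_deriv_pos (convex_Ioi 0)
  · intro x hx
    have hx' : 0 < x := hx
    exact (hasDerivAt_f σ2 hσ hx').continuousAt.continuousWithinAt
  · intro x hx
    rw [interior_Ioi] at hx
    have hx' : 0 < x := hx
    rw [(hasDerivAt_f σ2 hσ hx').deriv]
    have hlog : Real.log (1 + x / σ2) < x / σ2 := log_lt_aux (by positivity)
    have : σ2 * Real.log (1 + x / σ2) < x := by
      have := mul_lt_mul_of_pos_left hlog hσ
      rw [mul_div_cancel₀] at this
      · exact this
      · exact ne_of_gt hσ
    apply div_pos (by linarith) (by positivity)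

private lemma g_anti (σ2 : ℝ) (hσ : 0 < σ2) :
    StrictAntiOn (fun x : ℝ => Real.log (1 + x / σ2) / x) (Set.Ioi 0) := by
  apply strictAntiOn_of_deriv_neg (convex_Ioi 0)
  · intro x hx
    have hx' : 0 < x := hx
    exact (hasDerivAt_g σ2 hσ hx').continuousAt.continuousWithinAt
  · intro x hx
    rw [interior_Ioi] at hx
    have hx' : 0 < x := hx
    rw [(hasDerivAt_g σ2 hσ hx').deriv]
    have hu : 0 < x / σ2 := by positivity
    have hlog := lt_log_aux hu
    have hlt : x / (σ2 + x) < Real.log (1 + x / σ2) := by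
      have hne1 : σ2 ≠ 0 := ne_of_gt hσ
      have hne2 : σ2 + x ≠ 0 := by positivity
      have hne3 : 1 + x / σ2 ≠ 0 := by positivity
      have h2 : (x / σ2) / (1 + x / σ2) = x / (σ2 + x) := by
        field_simp
      linarith [h2 ▸ hlog]
    apply div_neg_of_neg_of_pos
    · linarith
    · positivity

private lemma lig_strictMono (n : ℕ) (hn : 0 < n) {x y : ℝ} (hx : 0 < x) (hxy : x < y) :
    lowerIncGamma n x < lowerIncGamma n y := by
  have hfun : (fun t : ℝ => t ^ ((n : ℝ) - 1) * Real.exp (-t))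
      = fun t : ℝ => t ^ (n - 1 : ℕ) * Real.exp (-t) := by
    funext t
    congr 1
    rw [← Real.rpow_natCast t (n - 1)]
    congr 1
    push_cast [Nat.cast_sub hn]
    ring
  have hcont : Continuous (fun t : ℝ => t ^ ((n : ℝ) - 1) * Real.exp (-t)) := by
    rw [hfun]; continuity
  have hint : ∀ a b : ℝ,
      IntervalIntegrable (fun t : ℝ => t ^ ((n : ℝ) - 1) * Real.exp (-t))
        MeasureTheory.volume a b := fun a b => hcont.intervalIntegrable a b
  have key : lowerIncGamma n y - lowerIncGamma n x
      = ∫ t in x..y, t ^ ((n : ℝ) - 1) * Real.exp (-t) := by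
    unfold lowerIncGamma
    rw [intervalIntegral.integral_interval_sub_left (hint 0 y) (hint 0 x)]
  have hpos : 0 < ∫ t in x..y, t ^ ((n : ℝ) - 1) * Real.exp (-t) := by
    apply intervalIntegral.intervalIntegral_pos_of_pos_on (hint x y)
    · intro t ht
      have ht0 : 0 < t := lt_trans hx ht.1
      have h1 : 0 < t ^ ((n : ℝ) - 1) := Real.rpow_pos_of_pos ht0 _
      positivity
    · exact hxy
  linarith [key ▸ hpos]

/-- The minimum detection error probability `ξ*(ρ)` is strictly decreasing on `(0,∞)`. -/
theorem stmt_17 (n : ℕ) (hn : 0 < n) (σ2 : ℝ) (hσ : 0 < σ2) :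
    StrictAntiOn (fun ρ : ℝ =>
        1 - lowerIncGamma n ((n : ℝ) * (σ2 + ρ) / ρ * Real.log (1 + ρ / σ2)) / Real.Gamma n
          + lowerIncGamma n ((n : ℝ) * σ2 / ρ * Real.log (1 + ρ / σ2)) / Real.Gamma n)
      (Set.Ioi 0) := by
  intro ρ1 h1 ρ2 h2 h12
  have h1' : (0:ℝ) < ρ1 := h1
  have h2' : (0:ℝ) < ρ2 := h2
  have hnR : (0:ℝ) < n := Nat.cast_pos.mpr hn
  have hΓ : 0 < Real.Gamma n := Real.Gamma_pos_of_pos hnR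
  -- rewrite arguments
  have ha_eq : ∀ ρ : ℝ, (n : ℝ) * (σ2 + ρ) / ρ * Real.log (1 + ρ / σ2)
      = (n : ℝ) * ((σ2 + ρ) * Real.log (1 + ρ / σ2) / ρ) := by intro ρ; ring
  have hb_eq : ∀ ρ : ℝ, (n : ℝ) * σ2 / ρ * Real.log (1 + ρ / σ2)
      = ((n : ℝ) * σ2) * (Real.log (1 + ρ / σ2) / ρ) := by intro ρ; ring
  have ha : (n : ℝ) * (σ2 + ρ1) / ρ1 * Real.log (1 + ρ1 / σ2)
      < (n : ℝ) * (σ2 + ρ2) / ρ2 * Real.log (1 + ρ2 / σ2) := by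
    rw [ha_eq, ha_eq]
    exact mul_lt_mul_of_pos_left (f_mono σ2 hσ h1 h2 h12) hnR
  have hb : (n : ℝ) * σ2 / ρ2 * Real.log (1 + ρ2 / σ2)
      < (n : ℝ) * σ2 / ρ1 * Real.log (1 + ρ1 / σ2) := by
    rw [hb_eq, hb_eq]
    exact mul_lt_mul_of_pos_left (g_anti σ2 hσ h1 h2 h12) (by positivity)
  have hq1 : 0 < ρ1 / σ2 := by positivity
  have hq2 : 0 < ρ2 / σ2 := by positivity
  have hlog1 : 0 < Real.log (1 + ρ1 / σ2) := Real.log_pos (by linarith)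
  have hlog2 : 0 < Real.log (1 + ρ2 / σ2) := Real.log_pos (by linarith)
  have hapos : 0 < (n : ℝ) * (σ2 + ρ1) / ρ1 * Real.log (1 + ρ1 / σ2) := by positivity
  have hbpos : 0 < (n : ℝ) * σ2 / ρ2 * Real.log (1 + ρ2 / σ2) := by positivity
  have hA := lig_strictMono n hn hapos ha
  have hB := lig_strictMono n hn hbpos hb
  have hA' : lowerIncGamma n ((n : ℝ) * (σ2 + ρ1) / ρ1 * Real.log (1 + ρ1 / σ2)) / Real.Gamma n
      < lowerIncGamma n ((n : ℝ) * (σ2 + ρ2) / ρ2 * Real.log (1 + ρ2 / σ2)) / Real.Gamma n :=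
    div_lt_div_of_pos_right hA hΓ
  have hB' : lowerIncGamma n ((n : ℝ) * σ2 / ρ2 * Real.log (1 + ρ2 / σ2)) / Real.Gamma n
      < lowerIncGamma n ((n : ℝ) * σ2 / ρ1 * Real.log (1 + ρ1 / σ2)) / Real.Gamma n :=
    div_lt_div_of_pos_right hB hΓ
  simp only []
  linarith
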